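/- Let k be a field of characteristic ≠ 2,3,7 containing √-3. An element j ∈ k is a fixed point of the Hessian map Hess(j) = (6912-j)³/(27j²) (with j ≠ 0) if and only if j = 1728 or j = (2⁷·3³/7)·(±3√-3 - 1). Equivalently, 27j²·(Hess(j)-j) = 4(j-1728)(-7j²-6912j-47775744) and the quadratic factor has roots (2⁷3³/7)(±3√-3-1). -/

import Mathlib

/-- over a field of characteristic `∉ {2,3,7}` containing `√-3`, the fixed
points of the Hessian map `j ↦ (6912-j)³/(27j²)` (for `j ≠ 0`) are exactly `1728` and
`(2⁷·3³/7)(±3√-3 - 1)`; equivalently `27j²(Hess(j) - j)` factors as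
`4(j-1728)(-7j² - 6912j - 47775744)`. -/
theorem hessian_fixed_points {K : Type*} [Field K]
    (h2 : (2 : K) ≠ 0) (h3 : (3 : K) ≠ 0) (h7 : (7 : K) ≠ 0)
    (s : K) (hs : s ^ 2 = -3) :
    (∀ j : K, j ≠ 0 →
      27 * j ^ 2 * ((6912 - j) ^ 3 / (27 * j ^ 2) - j) =
        4 * (j - 1728) * (-7 * j ^ 2 - 6912 * j - 47775744)) ∧
    (∀ j : K, -28 * j ^ 3 + 20736 * j ^ 2 - 143327232 * j + 330225942528 =
        4 * (j - 1728) * (-7 * j ^ 2 - 6912 * j - 47775744)) ∧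
    (∀ j : K, j ≠ 0 →
      ((6912 - j) ^ 3 / (27 * j ^ 2) = j ↔
        j = 1728 ∨ j = 2 ^ 7 * 3 ^ 3 / 7 * (3 * s - 1) ∨
          j = 2 ^ 7 * 3 ^ 3 / 7 * (-(3 * s) - 1))) := by
  have h27 : (27 : K) ≠ 0 := by
    have := mul_ne_zero h3 (mul_ne_zero h3 h3)
    intro h; rw [show (27 : K) = 3 * (3 * 3) by norm_num] at h; exact this h
  refine ⟨?_, ?_, ?_⟩
  · intro j hj
    have hne : (27 : K) * j ^ 2 ≠ 0 := mul_ne_zero h27 (pow_ne_zero _ hj)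
    field_simp
    ring
  · intro j; ring
  · intro j hj
    have hne : (27 : K) * j ^ 2 ≠ 0 := mul_ne_zero h27 (pow_ne_zero _ hj)
    set a : K := 2 ^ 7 * 3 ^ 3 / 7 * (3 * s - 1) with ha
    set b : K := 2 ^ 7 * 3 ^ 3 / 7 * (-(3 * s) - 1) with hb
    have hq : ∀ j : K, -7 * j ^ 2 - 6912 * j - 47775744 = -7 * (j - a) * (j - b) := by
      intro j
      rw [ha, hb]
      field_simp
      linear_combination (-107495424 : K) * hs
    rw [div_eq_iff hne]
    constructor
    · intro h
      have key : 4 * (j - 1728) * (-7 * (j - a) * (j - b)) = 0 := by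
        rw [← hq]; linear_combination h
      rcases mul_eq_zero.mp key with h1 | h1
      · rcases mul_eq_zero.mp h1 with h1 | h1
        · exact absurd h1 (by rw [show (4 : K) = 2 * 2 by norm_num]; exact mul_ne_zero h2 h2)
        · left; linear_combination h1
      · rcases mul_eq_zero.mp h1 with h1 | h1
        · rcases mul_eq_zero.mp h1 with h1 | h1
          · exact absurd (neg_eq_zero.mp h1) h7
          · right; left; exact sub_eq_zero.mp h1
        · right; right; exact sub_eq_zero.mp h1
    · intro h
      have key : 4 * (j - 1728) * (-7 * j ^ 2 - 6912 * j - 47775744) = 0 := by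
        rw [hq j]
        rcases h with h | h | h
        · subst h; ring
        · subst h; ring
        · subst h; ring
      linear_combination key
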